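/- For p, q, r positive integers, the symmetric matrix S(E_{p,q,r}) (of size 1+p+q+r, with (0,0)-entry 2, three diagonal blocks M_p, M_q, M_r, the (0,j)-entries equal to 1 precisely when j is the first index of a block, and zeros elsewhere) is positive definite if and only if -pqr + p + q + r + 2 > 0. -/

import Mathlib

/-- The p×p tridiagonal matrix with 2's on the diagonal and 1's on the
super- and sub-diagonal. -/
def Mtri (p : ℕ) : Matrix (Fin p) (Fin p) ℝ :=
  fun i j => if i = j then 2 else if (i : ℕ) + 1 = j ∨ (j : ℕ) + 1 = i then 1 else 0

/-- Whether an index of `Fin p ⊕ Fin q ⊕ Fin r` is the first index of its block. -/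
def isFirst {p q r : ℕ} : Fin p ⊕ Fin q ⊕ Fin r → Prop
  | .inl i => (i : ℕ) = 0
  | .inr (.inl i) => (i : ℕ) = 0
  | .inr (.inr i) => (i : ℕ) = 0

instance {p q r : ℕ} : DecidablePred (isFirst (p := p) (q := q) (r := r)) := by
  intro x; rcases x with i | i | i <;> simp [isFirst] <;> infer_instance

/-- The block-diagonal part `M_p ⊕ M_q ⊕ M_r`. -/
def blockMtri (p q r : ℕ) :
    Matrix (Fin p ⊕ Fin q ⊕ Fin r) (Fin p ⊕ Fin q ⊕ Fin r) ℝ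
  | .inl i, .inl j => Mtri p i j
  | .inr (.inl i), .inr (.inl j) => Mtri q i j
  | .inr (.inr i), .inr (.inr j) => Mtri r i j
  | _, _ => 0

/-- The symmetrized Seifert matrix of the fiber surface of the divide `E_{p,q,r}`. -/
def SE (p q r : ℕ) :
    Matrix (Unit ⊕ (Fin p ⊕ Fin q ⊕ Fin r)) (Unit ⊕ (Fin p ⊕ Fin q ⊕ Fin r)) ℝ
  | .inl _, .inl _ => 2
  | .inl _, .inr b => if isFirst b then 1 else 0
  | .inr a, .inl _ => if isFirst a then 1 else 0
  | .inr a, .inr b => blockMtri p q r a b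

open Finset Matrix

noncomputable def extv {m : ℕ} (v : Fin m → ℝ) : ℕ → ℝ :=
  fun i => if h : i < m then v ⟨i, h⟩ else 0

def consv (t : ℝ) (f : ℕ → ℝ) : ℕ → ℝ := fun i => match i with | 0 => t | k+1 => f k

lemma extv_coe {m} (v : Fin m → ℝ) (i : Fin m) : v i = extv v ↑i := by
  simp [extv, i.isLt]

lemma quadMtri (m : ℕ) (v : Fin m → ℝ) :
    v ⬝ᵥ (Mtri m) *ᵥ v
    = ∑ i ∈ range m, ∑ j ∈ range m,
      extv v i * ((if i = j then (2:ℝ) else if i + 1 = j ∨ j + 1 = i then 1 else 0) * extv v j) := by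
  rw [dotProduct, ← Fin.sum_univ_eq_sum_range (fun i => ∑ j ∈ range m,
      extv v i * ((if i = j then (2:ℝ) else if i + 1 = j ∨ j + 1 = i then 1 else 0) * extv v j)) m]
  refine Finset.sum_congr rfl fun i _ => ?_
  rw [Matrix.mulVec, dotProduct, ← Fin.sum_univ_eq_sum_range (fun j =>
      extv v ↑i * ((if (i:ℕ) = j then (2:ℝ) else if (i:ℕ) + 1 = j ∨ j + 1 = (i:ℕ) then 1 else 0) * extv v j)) m,
      Finset.mul_sum]
  refine Finset.sum_congr rfl fun j _ => ?_
  rw [← extv_coe, ← extv_coe]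
  simp only [Mtri, Fin.ext_iff]

lemma natQuad (m : ℕ) (f : ℕ → ℝ) :
    ∑ i ∈ range m, ∑ j ∈ range m,
      f i * ((if i = j then (2:ℝ) else if i + 1 = j ∨ j + 1 = i then 1 else 0) * f j)
    = ∑ i ∈ range m, 2 * f i ^ 2 + 2 * ∑ i ∈ range (m-1), f i * f (i+1) := by
  have key : ∀ i j : ℕ, f i * ((if i = j then (2:ℝ) else if i + 1 = j ∨ j + 1 = i then 1 else 0) * f j)
      = (if i = j then 2 * f i ^2 else 0) + (if i + 1 = j then f i * f j else 0)
        + (if j + 1 = i then f i * f j else 0) := by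
    intro i j
    split_ifs <;> first | (exfalso; omega) | (subst_vars; ring)
  simp only [key, Finset.sum_add_distrib]
  have h1 : ∀ i ∈ range m, ∑ j ∈ range m, (if i = j then 2 * f i ^ 2 else 0) = 2 * f i ^ 2 := by
    intro i hi
    rw [Finset.sum_ite_eq (range m) i (fun j => 2 * f i ^ 2), if_pos hi]
  have h2 : ∀ i ∈ range m, ∑ j ∈ range m, (if i + 1 = j then f i * f j else 0)
      = if i + 1 ∈ range m then f i * f (i+1) else 0 := by
    intro i hi
    rw [Finset.sum_ite_eq (range m) (i+1) (fun j => f i * f j)]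
  have h3 : ∑ i ∈ range m, ∑ j ∈ range m, (if j + 1 = i then f i * f j else 0)
      = ∑ j ∈ range m, (if j + 1 ∈ range m then f (j+1) * f j else 0) := by
    rw [Finset.sum_comm]
    exact Finset.sum_congr rfl fun j hj =>
      Finset.sum_ite_eq (range m) (j+1) (fun i => f i * f j)
  rw [Finset.sum_congr rfl h1, Finset.sum_congr rfl h2, h3]
  have h4 : ∀ g : ℕ → ℝ, ∑ i ∈ range m, (if i + 1 ∈ range m then g i else 0)
      = ∑ i ∈ range (m-1), g i := by
    intro g
    rw [← Finset.sum_subset (Finset.range_subset_range.2 (Nat.sub_le m 1))]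
    · refine Finset.sum_congr rfl fun i hi => ?_
      rw [if_pos]
      simp only [Finset.mem_range] at *
      omega
    · intro i hi hni
      rw [if_neg]
      simp only [Finset.mem_range] at *
      omega
  rw [h4, h4]
  have h5 : ∑ i ∈ range (m-1), f (i+1) * f i = ∑ i ∈ range (m-1), f i * f (i+1) :=
    Finset.sum_congr rfl fun i _ => mul_comm _ _
  rw [h5, Finset.mul_sum]
  have h6 : ∑ i ∈ range (m-1), 2 * (f i * f (i+1))
      = ∑ i ∈ range (m-1), f i * f (i+1) + ∑ i ∈ range (m-1), f i * f (i+1) := by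
    rw [← Finset.sum_add_distrib]
    exact Finset.sum_congr rfl fun i _ => by ring
  rw [h6]; ring

lemma keyId (p : ℕ) (A : ℕ → ℝ) :
    (p / (p+1) : ℝ) * A 0 ^ 2
      + ∑ i ∈ range p, (2 * A (i+1) ^ 2 + 2 * A i * A (i+1))
    = ∑ i ∈ range p, (((p:ℝ) - i) * ((p:ℝ) - i + 1)) *
        (A i / ((p:ℝ) - i + 1) + A (i+1) / ((p:ℝ) - i)) ^ 2 := by
  induction p generalizing A with
  | zero => simp
  | succ n ih =>
    rw [Finset.sum_range_succ' (fun i => 2 * A (i+1) ^ 2 + 2 * A i * A (i+1)),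
        Finset.sum_range_succ']
    have hs : ∑ i ∈ range n, ((((n+1:ℕ):ℝ) - ((i+1:ℕ):ℝ)) * (((n+1:ℕ):ℝ) - ((i+1:ℕ):ℝ) + 1)) *
        (A (i+1) / (((n+1:ℕ):ℝ) - ((i+1:ℕ):ℝ) + 1) + A (i+1+1) / (((n+1:ℕ):ℝ) - ((i+1:ℕ):ℝ))) ^ 2
        = ∑ i ∈ range n, (((n:ℝ) - i) * ((n:ℝ) - i + 1)) *
        ((fun k => A (k+1)) i / ((n:ℝ) - i + 1) + (fun k => A (k+1)) (i+1) / ((n:ℝ) - i)) ^ 2 := by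
      refine Finset.sum_congr rfl fun i hi => ?_
      have e : (((n+1:ℕ):ℝ) - ((i+1:ℕ):ℝ)) = (n:ℝ) - i := by push_cast; ring
      rw [e]
    rw [hs, ← ih (fun k => A (k+1))]
    have h1 : ((n:ℝ)+1) ≠ 0 := by positivity
    have h2 : ((n:ℝ)+2) ≠ 0 := by positivity
    push_cast [sub_zero]
    field_simp
    ring

/-- The sum-of-squares form. -/
noncomputable def Fform (m : ℕ) (t : ℝ) (v : Fin m → ℝ) : ℝ :=
  ∑ i ∈ range m, (((m:ℝ) - i) * ((m:ℝ) - i + 1)) *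
    (consv t (extv v) i / ((m:ℝ) - i + 1) + consv t (extv v) (i+1) / ((m:ℝ) - i)) ^ 2

lemma quadAux (m : ℕ) (hm : 0 < m) (t : ℝ) (v : Fin m → ℝ) :
    v ⬝ᵥ (Mtri m) *ᵥ v + 2 * t * extv v 0
    = ∑ i ∈ range m, (2 * consv t (extv v) (i+1) ^ 2
        + 2 * consv t (extv v) i * consv t (extv v) (i+1)) := by
  rw [quadMtri, natQuad]
  have h1 : ∑ i ∈ range m, (2 * consv t (extv v) (i+1) ^ 2
        + 2 * consv t (extv v) i * consv t (extv v) (i+1))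
      = ∑ i ∈ range m, 2 * extv v i ^ 2
        + ∑ i ∈ range m, 2 * consv t (extv v) i * extv v i := by
    rw [← Finset.sum_add_distrib]
    exact Finset.sum_congr rfl fun i _ => rfl
  rw [h1]
  obtain ⟨n, rfl⟩ : ∃ n, m = n + 1 := ⟨m - 1, by omega⟩
  rw [Finset.sum_range_succ' (fun i => 2 * consv t (extv v) i * extv v i)]
  show _ = _ + (_ + 2 * t * extv v 0)
  have : ∀ i ∈ range n, 2 * consv t (extv v) (i+1) * extv v (i+1)
      = 2 * (extv v i * extv v (i+1)) := fun i _ => by show 2 * extv v i * _ = _; ring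
  rw [Finset.sum_congr rfl this]
  simp only [Nat.add_sub_cancel]
  rw [Finset.mul_sum]
  ring

lemma blockVal (m : ℕ) (hm : 0 < m) (t : ℝ) (v : Fin m → ℝ) :
    v ⬝ᵥ (Mtri m) *ᵥ v + 2 * t * extv v 0
    = -((m:ℝ) / ((m:ℝ)+1) * t ^ 2) + Fform m t v := by
  have h := keyId m (consv t (extv v))
  rw [quadAux m hm t v]
  have h0 : consv t (extv v) 0 = t := rfl
  rw [h0] at h
  unfold Fform
  linarith [h]

lemma Fform_nonneg (m : ℕ) (t : ℝ) (v : Fin m → ℝ) : 0 ≤ Fform m t v := by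
  refine Finset.sum_nonneg fun i hi => ?_
  rw [Finset.mem_range] at hi
  have h1 : (0:ℝ) ≤ (m:ℝ) - i := by
    have : (i:ℝ) < m := by exact_mod_cast hi
    linarith
  positivity

lemma Q_nonneg (m : ℕ) (hm : 0 < m) (v : Fin m → ℝ) : 0 ≤ v ⬝ᵥ (Mtri m) *ᵥ v := by
  have h := blockVal m hm 0 v
  simp only [mul_zero, zero_mul, mul_assoc] at h
  have := Fform_nonneg m 0 v
  nlinarith [h]

lemma Q_pos (m : ℕ) (hm : 0 < m) (v : Fin m → ℝ) (hv : v ≠ 0) :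
    0 < v ⬝ᵥ (Mtri m) *ᵥ v := by
  rcases lt_or_eq_of_le (Q_nonneg m hm v) with h | h
  · exact h
  exfalso
  have hb := blockVal m hm 0 v
  rw [← h] at hb
  have hF : Fform m 0 v = 0 := by simp at hb; linarith
  unfold Fform at hF
  have hterm : ∀ i ∈ range m, (((m:ℝ) - i) * ((m:ℝ) - i + 1)) *
      (consv 0 (extv v) i / ((m:ℝ) - i + 1) + consv 0 (extv v) (i+1) / ((m:ℝ) - i)) ^ 2 = 0 := by
    refine (Finset.sum_eq_zero_iff_of_nonneg ?_).1 hF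
    intro i hi
    rw [Finset.mem_range] at hi
    have h1 : (0:ℝ) ≤ (m:ℝ) - i := by
      have : (i:ℝ) < m := by exact_mod_cast hi
      linarith
    positivity
  have hzero : ∀ i, i ≤ m → consv 0 (extv v) i = 0 := by
    intro i
    induction i with
    | zero => intro _; rfl
    | succ k ihk =>
      intro hk
      have hkm : k < m := by omega
      have hkm' : (k:ℝ) < m := by exact_mod_cast hkm
      have ht := hterm k (Finset.mem_range.2 hkm)
      have hc : (0:ℝ) < ((m:ℝ) - k) * ((m:ℝ) - k + 1) := by nlinarith
      have hsq : (consv 0 (extv v) k / ((m:ℝ) - k + 1)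
          + consv 0 (extv v) (k+1) / ((m:ℝ) - k)) = 0 := by
        have := mul_eq_zero.1 ht
        rcases this with h' | h'
        · exact absurd h' (ne_of_gt hc)
        · exact pow_eq_zero_iff (by norm_num) |>.1 h'
      rw [ihk (by omega)] at hsq
      have : consv 0 (extv v) (k+1) / ((m:ℝ) - k) = 0 := by
        simpa using hsq
      have hne : ((m:ℝ) - k) ≠ 0 := by linarith
      exact (div_eq_zero_iff.1 this).resolve_right hne
  apply hv
  funext j
  have := hzero (j+1) (by omega)
  show v j = 0
  rw [extv_coe v j]
  exact this

/-- The minimizing vector. -/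
noncomputable def wv (m : ℕ) (t : ℝ) : Fin m → ℝ :=
  fun j => (-1:ℝ)^((j:ℕ)+1) * (((m:ℝ) - (j:ℕ)) / ((m:ℝ)+1)) * t

lemma wv_consv (m : ℕ) (t : ℝ) (i : ℕ) (hi : i ≤ m) :
    consv t (extv (wv m t)) i = (-1:ℝ)^i * (((m:ℝ) - i + 1) / ((m:ℝ)+1)) * t := by
  match i with
  | 0 =>
    have hne : ((m:ℝ)+1) ≠ 0 := by positivity
    show t = _
    field_simp
    simp
  | (k+1) =>
    have hk : k < m := by omega
    show extv (wv m t) k = _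
    rw [extv, dif_pos hk]
    show (-1:ℝ)^(k+1) * (((m:ℝ) - (k:ℕ)) / ((m:ℝ)+1)) * t = _
    push_cast
    ring

lemma Fform_min (m : ℕ) (hm : 0 < m) (t : ℝ) : Fform m t (wv m t) = 0 := by
  unfold Fform
  refine Finset.sum_eq_zero fun i hi => ?_
  rw [Finset.mem_range] at hi
  have h1 : (1:ℝ) ≤ (m:ℝ) - i := by
    have : (i:ℝ) + 1 ≤ (m:ℝ) := by exact_mod_cast hi
    linarith
  rw [wv_consv m t i (by omega), wv_consv m t (i+1) (by omega)]
  have e1 : ((m:ℝ) - i) ≠ 0 := by linarith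
  have e2 : ((m:ℝ) - i + 1) ≠ 0 := by linarith
  have e3 : ((m:ℝ) + 1) ≠ 0 := by positivity
  have : ((-1:ℝ)^i * (((m:ℝ) - i + 1) / ((m:ℝ)+1)) * t / ((m:ℝ) - i + 1)
      + (-1:ℝ)^(i+1) * (((m:ℝ) - (i+1:ℕ) + 1) / ((m:ℝ)+1)) * t / ((m:ℝ) - i)) = 0 := by
    push_cast
    field_simp
    ring
  rw [this]
  ring

lemma firstSum (m : ℕ) (hm : 0 < m) (v : Fin m → ℝ) (c : ℝ) :
    ∑ i : Fin m, v i * ((if (i:ℕ) = 0 then (1:ℝ) else 0) * c) = v ⟨0, hm⟩ * c := by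
  rw [Finset.sum_eq_single (⟨0, hm⟩ : Fin m)]
  · simp
  · intro b _ hb
    have hb' : ¬((b:ℕ) = 0) := fun h => hb (Fin.ext h)
    rw [if_neg hb', zero_mul, mul_zero]
  · simp

lemma firstSum' (m : ℕ) (hm : 0 < m) (v : Fin m → ℝ) (c : ℝ) :
    ∑ i : Fin m, c * ((if (i:ℕ) = 0 then (1:ℝ) else 0) * v i) = c * v ⟨0, hm⟩ := by
  rw [Finset.sum_eq_single (⟨0, hm⟩ : Fin m)]
  · simp
  · intro b _ hb
    have hb' : ¬((b:ℕ) = 0) := fun h => hb (Fin.ext h)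
    rw [if_neg hb', zero_mul, mul_zero]
  · simp

lemma SE_herm (p q r : ℕ) : (SE p q r).IsHermitian := by
  rw [Matrix.IsHermitian]
  ext i j
  rcases i with _ | i | i | i <;> rcases j with _ | j | j | j <;>
    simp [Matrix.conjTranspose_apply, SE, blockMtri, Mtri, Fin.ext_iff] <;>
    split_ifs <;> first | rfl | (exfalso; omega)

lemma SE_quad (p q r : ℕ) (hp : 0 < p) (hq : 0 < q) (hr : 0 < r)
    (x : Unit ⊕ (Fin p ⊕ Fin q ⊕ Fin r) → ℝ) :
    x ⬝ᵥ (SE p q r) *ᵥ x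
    = 2 * (x (Sum.inl ())) ^ 2
      + ((fun i => x (Sum.inr (Sum.inl i))) ⬝ᵥ (Mtri p) *ᵥ (fun i => x (Sum.inr (Sum.inl i)))
          + 2 * x (Sum.inl ()) * x (Sum.inr (Sum.inl ⟨0, hp⟩)))
      + ((fun i => x (Sum.inr (Sum.inr (Sum.inl i)))) ⬝ᵥ (Mtri q) *ᵥ (fun i => x (Sum.inr (Sum.inr (Sum.inl i))))
          + 2 * x (Sum.inl ()) * x (Sum.inr (Sum.inr (Sum.inl ⟨0, hq⟩))))
      + ((fun i => x (Sum.inr (Sum.inr (Sum.inr i)))) ⬝ᵥ (Mtri r) *ᵥ (fun i => x (Sum.inr (Sum.inr (Sum.inr i))))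
          + 2 * x (Sum.inl ()) * x (Sum.inr (Sum.inr (Sum.inr ⟨0, hr⟩)))) := by
  simp only [dotProduct, Matrix.mulVec, Fintype.sum_sum_type, Fintype.sum_unique,
    SE, blockMtri, isFirst, Finset.mul_sum, Finset.sum_add_distrib, mul_add, add_mul,
    zero_mul, mul_zero, Finset.sum_const_zero, add_zero, zero_add]
  rw [show (default : Unit) = () from rfl]
  rw [firstSum p hp, firstSum q hq, firstSum r hr, firstSum' p hp, firstSum' q hq, firstSum' r hr]
  ring

theorem SE_posDef_iff (p q r : ℕ) (hp : 0 < p) (hq : 0 < q) (hr : 0 < r) :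
    (SE p q r).PosDef ↔ (0 : ℝ) < -(p * q * r : ℝ) + p + q + r + 2 := by
  have hp1 : ((p:ℝ)+1) ≠ 0 := by positivity
  have hq1 : ((q:ℝ)+1) ≠ 0 := by positivity
  have hr1 : ((r:ℝ)+1) ≠ 0 := by positivity
  have hcoef : 2 - (p:ℝ)/((p:ℝ)+1) - (q:ℝ)/((q:ℝ)+1) - (r:ℝ)/((r:ℝ)+1)
      = (-((p:ℝ)*(q:ℝ)*(r:ℝ)) + (p:ℝ) + (q:ℝ) + (r:ℝ) + 2)
        / (((p:ℝ)+1)*((q:ℝ)+1)*((r:ℝ)+1)) := by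
    field_simp
    ring
  constructor
  · intro hpd
    by_contra hle
    push_neg at hle
    have hxne : (Sum.elim (fun _ => (1:ℝ))
        (Sum.elim (wv p 1) (Sum.elim (wv q 1) (wv r 1))) :
        Unit ⊕ (Fin p ⊕ Fin q ⊕ Fin r) → ℝ) ≠ 0 := by
      intro h0
      have := congrFun h0 (Sum.inl ())
      simp at this
    have hpos := hpd.dotProduct_mulVec_pos hxne
    have hstar : (star (Sum.elim (fun _ => (1:ℝ))
        (Sum.elim (wv p 1) (Sum.elim (wv q 1) (wv r 1))) :
        Unit ⊕ (Fin p ⊕ Fin q ⊕ Fin r) → ℝ)) = Sum.elim (fun _ => (1:ℝ))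
        (Sum.elim (wv p 1) (Sum.elim (wv q 1) (wv r 1))) := funext fun i => rfl
    rw [hstar, SE_quad p q r hp hq hr] at hpos
    simp only [Sum.elim_inl, Sum.elim_inr] at hpos
    have b1 := blockVal p hp 1 (wv p 1)
    have b2 := blockVal q hq 1 (wv q 1)
    have b3 := blockVal r hr 1 (wv r 1)
    rw [Fform_min p hp 1] at b1
    rw [Fform_min q hq 1] at b2
    rw [Fform_min r hr 1] at b3
    rw [show extv (wv p 1) 0 = wv p 1 ⟨0, hp⟩ from dif_pos hp] at b1
    rw [show extv (wv q 1) 0 = wv q 1 ⟨0, hq⟩ from dif_pos hq] at b2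
    rw [show extv (wv r 1) 0 = wv r 1 ⟨0, hr⟩ from dif_pos hr] at b3
    have hval : (0:ℝ) < 2 - (p:ℝ)/((p:ℝ)+1) - (q:ℝ)/((q:ℝ)+1) - (r:ℝ)/((r:ℝ)+1) := by
      nlinarith [hpos, b1, b2, b3]
    rw [hcoef] at hval
    have hden : (0:ℝ) < ((p:ℝ)+1)*((q:ℝ)+1)*((r:ℝ)+1) := by positivity
    have hnum := (div_pos_iff.1 hval)
    rcases hnum with ⟨h1, _⟩ | ⟨_, h2⟩
    · linarith
    · linarith
  · intro hnum
    refine Matrix.PosDef.of_dotProduct_mulVec_pos (SE_herm p q r) ?_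
    intro x hxne
    have hstar : star x = x := funext fun i => rfl
    rw [hstar, SE_quad p q r hp hq hr x]
    set t := x (Sum.inl ()) with hts
    set a : Fin p → ℝ := fun i => x (Sum.inr (Sum.inl i)) with ha
    set b : Fin q → ℝ := fun i => x (Sum.inr (Sum.inr (Sum.inl i))) with hb
    set c : Fin r → ℝ := fun i => x (Sum.inr (Sum.inr (Sum.inr i))) with hc
    have ea : x (Sum.inr (Sum.inl ⟨0, hp⟩)) = extv a 0 := by rw [ha]; simp [extv, hp]
    have eb : x (Sum.inr (Sum.inr (Sum.inl ⟨0, hq⟩))) = extv b 0 := by rw [hb]; simp [extv, hq]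
    have ec : x (Sum.inr (Sum.inr (Sum.inr ⟨0, hr⟩))) = extv c 0 := by rw [hc]; simp [extv, hr]
    rw [ea, eb, ec]
    by_cases ht : t = 0
    · obtain ⟨i, hi⟩ := Function.ne_iff.1 hxne
      have hQa := Q_nonneg p hp a
      have hQb := Q_nonneg q hq b
      have hQc := Q_nonneg r hr c
      have hext0 : ∀ (m : ℕ) (v : Fin m → ℝ), v = 0 → extv v 0 = 0 := by
        intro m v hv; simp [hv, extv]
      rcases i with u | i | i | i
      · exfalso
        apply hi
        cases u
        show x (Sum.inl ()) = _
        simp only [Pi.zero_apply]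
        rw [← hts]
        exact ht
      · have hane : a ≠ 0 := fun h0 => hi (by
          have := congrFun h0 i; simpa [ha] using this)
        have := Q_pos p hp a hane
        rw [ht]
        ring_nf
        nlinarith [this, hQb, hQc]
      · have hbne : b ≠ 0 := fun h0 => hi (by
          have := congrFun h0 i; simpa [hb] using this)
        have := Q_pos q hq b hbne
        rw [ht]
        ring_nf
        nlinarith [this, hQa, hQc]
      · have hcne : c ≠ 0 := fun h0 => hi (by
          have := congrFun h0 i; simpa [hc] using this)
        have := Q_pos r hr c hcne
        rw [ht]
        ring_nf
        nlinarith [this, hQa, hQb]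
    · rw [blockVal p hp t a, blockVal q hq t b, blockVal r hr t c]
      have hcpos : (0:ℝ) < 2 - (p:ℝ)/((p:ℝ)+1) - (q:ℝ)/((q:ℝ)+1) - (r:ℝ)/((r:ℝ)+1) := by
        rw [hcoef]
        exact div_pos hnum (by positivity)
      have ht2 : (0:ℝ) < t^2 := by positivity
      nlinarith [Fform_nonneg p t a, Fform_nonneg q t b, Fform_nonneg r t c,
        mul_pos hcpos ht2]
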